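/- Let 1 ≤ q₁, q₂, p ≤ ∞ satisfy 1/q₁ + 1/q₂ = 1/p + 1, and let 1 ≤ r ≤ ∞. Then for all finite families {f^1_{k₁}}_{k₁=1}^{n₁} ⊂ L^{q₁}(ℝ) and {f^2_{k₂}}_{k₂=1}^{n₂} ⊂ L^{q₂}(ℝ) (Lebesgue measure on ℝ), with f*g(x) = ∫_ℝ f(x−y)g(y) dy the convolution: ‖(∑_{k₁,k₂} |f^1_{k₁} * f^2_{k₂}|^r)^{1/r}‖_{L^p(ℝ)} ≤ ‖(∑_{k₁=1}^{n₁} |f^1_{k₁}|^r)^{1/r}‖_{L^{q₁}(ℝ)} · ‖(∑_{k₂=1}^{n₂} |f^2_{k₂}|^r)^{1/r}‖_{L^{q₂}(ℝ)}, with suprema over the indices replacing the ℓ^r sums when r = ∞. -/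

import Mathlib

open MeasureTheory ENNReal

noncomputable def lrNorm {ι : Type} [Fintype ι] (r : ℝ≥0∞) (a : ι → ℝ) : ℝ :=
  if r = ∞ then ⨆ k, |a k| else (∑ k, |a k| ^ r.toReal) ^ (1 / r.toReal)



noncomputable def s19eL {ι : Type*} [Fintype ι] (r : ℝ≥0∞) (a : ι → ℝ≥0∞) : ℝ≥0∞ :=
  if r = ∞ then ⨆ k, a k else (∑ k, a k ^ r.toReal) ^ (1 / r.toReal)

lemma s19eL_mono {ι : Type*} [Fintype ι] (r : ℝ≥0∞) {a b : ι → ℝ≥0∞} (h : ∀ k, a k ≤ b k) :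
    s19eL r a ≤ s19eL r b := by
  unfold s19eL
  split
  · exact iSup_mono h
  · exact ENNReal.rpow_le_rpow (Finset.sum_le_sum fun k _ =>
      ENNReal.rpow_le_rpow (h k) ENNReal.toReal_nonneg) (by positivity)

lemma s19eL_le (r : ℝ≥0∞) (hr : 1 ≤ r) {ι : Type*} [Fintype ι] (a : ι → ℝ≥0∞) (k : ι) :
    a k ≤ s19eL r a := by
  unfold s19eL
  split
  · exact le_iSup a k
  · have hρ : 0 < r.toReal := ENNReal.toReal_pos (fun h => by simp [h] at hr) ‹_›
    calc a k = (a k ^ r.toReal) ^ (1 / r.toReal) := by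
          rw [← ENNReal.rpow_mul, mul_one_div_cancel hρ.ne', ENNReal.rpow_one]
      _ ≤ _ := ENNReal.rpow_le_rpow (Finset.single_le_sum
          (f := fun i => a i ^ r.toReal) (fun i _ => zero_le)
          (Finset.mem_univ k)) (by positivity)

lemma s19eL_measurable {ι : Type*} [Fintype ι] (r : ℝ≥0∞) {α : Type*} [MeasurableSpace α]
    {u : ι → α → ℝ≥0∞} (hu : ∀ k, Measurable (u k)) :
    Measurable fun x => s19eL r (fun k => u k x) := by
  unfold s19eL
  split
  · exact Measurable.iSup fun k => hu k
  · exact (Finset.measurable_sum _ fun k _ => (hu k).pow_const _).pow_const _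

lemma s19eL_mul {ι₁ ι₂ : Type*} [Fintype ι₁] [Fintype ι₂] (r : ℝ≥0∞)
    (u : ι₁ → ℝ≥0∞) (v : ι₂ → ℝ≥0∞) :
    s19eL r (fun k : ι₁ × ι₂ => u k.1 * v k.2) = s19eL r u * s19eL r v := by
  unfold s19eL
  split
  · rw [iSup_prod]
    simp_rw [ENNReal.iSup_mul, ENNReal.mul_iSup]
  · rw [← ENNReal.mul_rpow_of_nonneg _ _ (by positivity)]
    congr 1
    rw [Finset.sum_mul_sum, ← Finset.univ_product_univ, Finset.sum_product]
    exact Finset.sum_congr rfl fun k _ => Finset.sum_congr rfl fun l _ =>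
      ENNReal.mul_rpow_of_nonneg _ _ ENNReal.toReal_nonneg



lemma s19coe_lrNorm {ι : Type} [Fintype ι] (r : ℝ≥0∞) (hr : 1 ≤ r) (a : ι → ℝ) :
    (‖lrNorm r a‖₊ : ℝ≥0∞) = s19eL r (fun k => (‖a k‖₊ : ℝ≥0∞)) := by
  unfold lrNorm s19eL
  split
  · rcases isEmpty_or_nonempty ι with h | h
    · simp [iSup_of_empty, Real.iSup_of_isEmpty]
    · obtain ⟨k₀, hk₀⟩ := Finite.exists_max fun k => |a k|
      have h1 : (⨆ k, |a k|) = |a k₀| :=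
        le_antisymm (ciSup_le hk₀) (le_ciSup (Set.Finite.bddAbove (Set.finite_range fun k => |a k|)) k₀)
      have h2 : (⨆ k, (‖a k‖₊ : ℝ≥0∞)) = (‖a k₀‖₊ : ℝ≥0∞) := by
        refine le_antisymm (iSup_le fun k => ?_) (le_iSup (fun k => (‖a k‖₊ : ℝ≥0∞)) k₀)
        simp only [coe_le_coe, ← NNReal.coe_le_coe, coe_nnnorm, Real.norm_eq_abs]
        exact hk₀ k
      rw [h1, h2]
      simp [Real.nnnorm_abs]
  · have hρ : 0 < r.toReal := ENNReal.toReal_pos (fun h => by simp [h] at hr) ‹_›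
    have hsum : 0 ≤ ∑ k, |a k| ^ r.toReal := Finset.sum_nonneg fun k _ => by positivity
    rw [← enorm_eq_nnnorm, Real.enorm_eq_ofReal (by positivity)]
    · rw [
        ← ENNReal.ofReal_rpow_of_nonneg hsum (by positivity), ENNReal.ofReal_sum_of_nonneg
        (fun k _ => by positivity)]
      congr 1
      refine Finset.sum_congr rfl fun k _ => ?_
      rw [← ENNReal.ofReal_rpow_of_nonneg (abs_nonneg _) hρ.le]
      congr 1
      exact (Real.enorm_eq_ofReal_abs _).symm

lemma s19finset_holder {ι : Type*} [Fintype ι] (u v : ι → ℝ≥0∞) {ρ ρ' : ℝ}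
    (h : ρ.HolderConjugate ρ') :
    ∑ k, u k * v k ≤ (∑ k, u k ^ ρ) ^ (1/ρ) * (∑ k, v k ^ ρ') ^ (1/ρ') := by
  letI : MeasurableSpace ι := ⊤
  haveI : MeasurableSingletonClass ι := ⟨fun _ => trivial⟩
  have := ENNReal.lintegral_mul_le_Lp_mul_Lq (Measure.count : Measure ι) h
    (measurable_of_finite u).aemeasurable (measurable_of_finite v).aemeasurable
  simpa [MeasureTheory.lintegral_count, tsum_fintype] using this

/-- Minkowski's integral inequality for finite families, `ℝ≥0∞` version. -/
lemma s19minkowski {ι : Type*} [Fintype ι] (r : ℝ≥0∞) (hr : 1 ≤ r)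
    {α : Type*} [MeasurableSpace α] (μ : Measure α)
    {u : ι → α → ℝ≥0∞} (hu : ∀ k, Measurable (u k)) :
    s19eL r (fun k => ∫⁻ y, u k y ∂μ) ≤ ∫⁻ y, s19eL r (fun k => u k y) ∂μ := by
  rcases eq_or_ne r ∞ with hrt | hrt
  · subst hrt
    simp only [s19eL, if_pos rfl]
    exact iSup_le fun k => lintegral_mono fun y => le_iSup (fun k => u k y) k
  have hρ1 : 1 ≤ r.toReal := by
    rw [← ENNReal.toReal_one]
    exact ENNReal.toReal_mono hrt hr
  set ρ := r.toReal with hρdef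
  rcases eq_or_lt_of_le hρ1 with hρeq | hρlt
  · -- ρ = 1 : additivity
    have h1 : r.toReal = 1 := hρeq.symm
    simp only [s19eL, if_neg hrt, h1, ENNReal.rpow_one, one_div_one]
    rw [← lintegral_finset_sum _ fun k _ => hu k]
  · -- ρ > 1 : duality
    have hρ0 : (0:ℝ) < ρ := by linarith
    have hne1 : ρ - 1 ≠ 0 := by linarith
    set ρ' := ρ / (ρ - 1) with hρ'def
    have hρ'0 : (0:ℝ) < ρ' := div_pos hρ0 (by linarith)
    have hconj : ρ.HolderConjugate ρ' := (Real.holderConjugate_iff_eq_conjExponent hρlt).mpr hρ'def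
    have hsum11 : 1/ρ + 1/ρ' = 1 := by
      rw [hρ'def]
      field_simp; ring
    have hmulexp : (ρ - 1) * ρ' = ρ := by
      rw [hρ'def]
      field_simp
    simp only [s19eL, if_neg hrt]
    set I := fun k => ∫⁻ y, u k y ∂μ with hI
    set S := ∑ k, I k ^ ρ with hS
    set T := ∫⁻ y, (∑ k, u k y ^ ρ) ^ (1/ρ) ∂μ with hT
    show S ^ (1/ρ) ≤ T
    rcases eq_or_ne S 0 with hS0 | hS0
    · rw [hS0, ENNReal.zero_rpow_of_pos (by positivity)]
      exact zero_le
    rcases eq_or_ne S ∞ with hStop | hStop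
    · -- some I k = ∞, then T = ∞
      have : ∃ k, I k = ∞ := by
        by_contra hcon
        push_neg at hcon
        exact absurd hStop (ENNReal.sum_ne_top.mpr fun k _ =>
          ENNReal.rpow_ne_top_of_nonneg hρ0.le (hcon k))
      obtain ⟨k, hk⟩ := this
      have hkT : I k ≤ T := by
        refine lintegral_mono fun y => ?_
        calc u k y = (u k y ^ ρ) ^ (1/ρ) := by
              rw [← ENNReal.rpow_mul, mul_one_div_cancel hρ0.ne', ENNReal.rpow_one]
          _ ≤ (∑ k, u k y ^ ρ) ^ (1/ρ) := ENNReal.rpow_le_rpow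
              (Finset.single_le_sum (f := fun i => u i y ^ ρ) (fun i _ => zero_le)
                (Finset.mem_univ k)) (by positivity)
      have hTtop : T = ∞ := top_le_iff.mp (hk ▸ hkT)
      rw [hTtop]
      exact le_top
    -- main duality computation
    have hIlt : ∀ k, I k ≠ ∞ := by
      intro k hk
      apply hStop
      refine top_le_iff.mp ?_
      calc (∞:ℝ≥0∞) = I k ^ ρ := by rw [hk, ENNReal.top_rpow_of_pos hρ0]
        _ ≤ S := Finset.single_le_sum (f := fun i => I i ^ ρ) (fun i _ => zero_le)
            (Finset.mem_univ k)
    set c := fun k => I k ^ (ρ - 1) with hc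
    have hcne : ∀ k, c k ≠ ∞ := fun k => ENNReal.rpow_ne_top_of_nonneg (by linarith) (hIlt k)
    have hS'top : S ^ (1/ρ') ≠ ∞ := ENNReal.rpow_ne_top_of_nonneg (by positivity) hStop
    have key : S ≤ T * S ^ (1/ρ') := by
      have h1 : S = ∫⁻ y, ∑ k, u k y * c k ∂μ := by
        rw [lintegral_finset_sum _ fun k _ => (hu k).mul_const _]
        refine Finset.sum_congr rfl fun k _ => ?_
        rw [lintegral_mul_const' _ _ (hcne k)]
        show I k ^ ρ = I k * I k ^ (ρ - 1)
        conv_lhs => rw [show ρ = 1 + (ρ - 1) by ring]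
        rw [ENNReal.rpow_add_of_nonneg _ _ zero_le_one (by linarith), ENNReal.rpow_one]
      have h2 : ∀ y, ∑ k, u k y * c k ≤ (∑ k, u k y ^ ρ) ^ (1/ρ) * S ^ (1/ρ') := by
        intro y
        calc ∑ k, u k y * c k ≤ (∑ k, u k y ^ ρ) ^ (1/ρ) * (∑ k, c k ^ ρ') ^ (1/ρ') :=
              s19finset_holder _ _ hconj
          _ = (∑ k, u k y ^ ρ) ^ (1/ρ) * S ^ (1/ρ') := by
              congr 2
              refine Finset.sum_congr rfl fun k _ => ?_
              rw [hc, ← ENNReal.rpow_mul, hmulexp]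
      calc S = ∫⁻ y, ∑ k, u k y * c k ∂μ := h1
        _ ≤ ∫⁻ y, (∑ k, u k y ^ ρ) ^ (1/ρ) * S ^ (1/ρ') ∂μ := lintegral_mono h2
        _ = T * S ^ (1/ρ') := lintegral_mul_const' _ _ hS'top
    -- cancel S ^ (1/ρ')
    have hSsplit : S = S ^ (1/ρ) * S ^ (1/ρ') := by
      rw [← ENNReal.rpow_add_of_nonneg _ _ (by positivity) (by positivity), hsum11,
        ENNReal.rpow_one]
    have hS' : S ^ (1/ρ') ≠ 0 := by
      intro h
      rw [ENNReal.rpow_eq_zero_iff] at h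
      rcases h with ⟨h, _⟩ | ⟨h, _⟩
      exacts [hS0 h, hStop h]
    have key2 : S ^ (1/ρ) * S ^ (1/ρ') ≤ T * S ^ (1/ρ') := by
      rw [← hSsplit]; exact key
    exact (ENNReal.mul_le_mul_iff_left hS' hS'top).mp key2



noncomputable def s19J (p : ℝ≥0∞) (h : ℝ → ℝ≥0∞) : ℝ≥0∞ :=
  if p = ∞ then essSup h volume else (∫⁻ x, h x ^ p.toReal) ^ (1 / p.toReal)

/-- Three-factor Hölder inequality for `ℝ≥0∞`-valued lintegrals. -/
lemma s19holder3 {α : Type*} [MeasurableSpace α] (μ : Measure α) {F G H : α → ℝ≥0∞}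
    (hF : Measurable F) (hG : Measurable G) (hH : Measurable H) {c s t : ℝ}
    (hc : 1 < c) (hs : 1 < s) (ht : 1 < t) (hsum : 1/c + 1/s + 1/t = 1) :
    ∫⁻ x, F x * G x * H x ∂μ ≤
      (∫⁻ x, F x ^ c ∂μ) ^ (1/c) * (∫⁻ x, G x ^ s ∂μ) ^ (1/s) * (∫⁻ x, H x ^ t ∂μ) ^ (1/t) := by
  have hc0 : (0:ℝ) < c := by linarith
  have hs0 : (0:ℝ) < s := by linarith
  have ht0 : (0:ℝ) < t := by linarith
  set c' := c / (c - 1) with hc'def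
  have hc'0 : (0:ℝ) < c' := div_pos hc0 (by linarith)
  have hcc' : c.HolderConjugate c' := (Real.holderConjugate_iff_eq_conjExponent hc).mpr hc'def
  have hc'sum : 1/c' = 1/s + 1/t := by
    have h1 : 1/c + 1/c' = 1 := by rw [hc'def]; field_simp; ring
    linarith
  have hst : 1/(s/c') + 1/(t/c') = 1 := by
    rw [one_div_div, one_div_div]
    have h5 : c'/s + c'/t = c' * (1/s + 1/t) := by ring
    rw [h5, ← hc'sum, mul_one_div, div_self hc'0.ne']
  have hsc' : 1 < s / c' := by
    rw [lt_div_iff₀ hc'0, one_mul]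
    rw [← inv_lt_inv₀ hs0 hc'0, ← one_div, ← one_div, hc'sum]
    have : (0:ℝ) < 1/t := by positivity
    linarith
  have hconj2 : (s/c').HolderConjugate (t/c') := Real.holderConjugate_iff.mpr ⟨hsc', by
    rw [inv_eq_one_div, inv_eq_one_div]; exact hst⟩
  calc ∫⁻ x, F x * G x * H x ∂μ = ∫⁻ x, F x * (G x * H x) ∂μ := by
        simp_rw [mul_assoc]
    _ ≤ (∫⁻ x, F x ^ c ∂μ) ^ (1/c) * (∫⁻ x, (G x * H x) ^ c' ∂μ) ^ (1/c') :=
        ENNReal.lintegral_mul_le_Lp_mul_Lq μ hcc' hF.aemeasurable (hG.mul hH).aemeasurable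
    _ ≤ _ := by
        rw [mul_assoc]
        refine mul_le_mul_right ?_ _
        have h1 : ∫⁻ x, (G x * H x) ^ c' ∂μ = ∫⁻ x, G x ^ c' * H x ^ c' ∂μ := by
          congr 1; funext x; exact ENNReal.mul_rpow_of_nonneg _ _ hc'0.le
        have h2 : ∫⁻ x, G x ^ c' * H x ^ c' ∂μ ≤
            (∫⁻ x, (G x ^ c') ^ (s/c') ∂μ) ^ (1/(s/c')) *
            (∫⁻ x, (H x ^ c') ^ (t/c') ∂μ) ^ (1/(t/c')) :=
          ENNReal.lintegral_mul_le_Lp_mul_Lq μ hconj2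
            ((hG.pow_const _)).aemeasurable ((hH.pow_const _)).aemeasurable
        have h3 : ∀ x, (G x ^ c') ^ (s/c') = G x ^ s := fun x => by
          rw [← ENNReal.rpow_mul]; congr 1; field_simp
        have h4 : ∀ x, (H x ^ c') ^ (t/c') = H x ^ t := fun x => by
          rw [← ENNReal.rpow_mul]; congr 1; field_simp
        simp_rw [h3, h4] at h2
        calc (∫⁻ x, (G x * H x) ^ c' ∂μ) ^ (1/c')
            ≤ ((∫⁻ x, G x ^ s ∂μ) ^ (1/(s/c')) * (∫⁻ x, H x ^ t ∂μ) ^ (1/(t/c'))) ^ (1/c') := by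
              rw [h1]
              exact ENNReal.rpow_le_rpow h2 (by positivity)
          _ = (∫⁻ x, G x ^ s ∂μ) ^ (1/s) * (∫⁻ x, H x ^ t ∂μ) ^ (1/t) := by
              rw [ENNReal.mul_rpow_of_nonneg _ _ (by positivity), ← ENNReal.rpow_mul,
                ← ENNReal.rpow_mul]
              congr 2 <;> field_simp <;> ring

lemma s19lint_sub_left (φ : ℝ → ℝ≥0∞) (hφ : Measurable φ) (x : ℝ) :
    ∫⁻ y, φ (x - y) = ∫⁻ y, φ y :=
  (MeasureTheory.Measure.measurePreserving_sub_left volume x).lintegral_comp hφ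

lemma s19lint_sub_right (φ : ℝ → ℝ≥0∞) (hφ : Measurable φ) (y : ℝ) :
    ∫⁻ x, φ (x - y) = ∫⁻ x, φ x :=
  (MeasureTheory.measurePreserving_sub_right volume y).lintegral_comp hφ


/-- Young's convolution inequality, finite exponents, `ℝ≥0∞` version. -/
lemma s19young_finite {a b c : ℝ} (ha1 : 1 ≤ a) (hb1 : 1 ≤ b) (hc1 : 1 ≤ c)
    (habc : 1/a + 1/b = 1/c + 1) {φ ψ : ℝ → ℝ≥0∞} (hφ : Measurable φ) (hψ : Measurable ψ) :
    (∫⁻ x, (∫⁻ y, φ (x - y) * ψ y) ^ c) ^ (1/c) ≤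
      (∫⁻ z, φ z ^ a) ^ (1/a) * (∫⁻ z, ψ z ^ b) ^ (1/b) := by
  have hφx : ∀ x : ℝ, Measurable fun y => φ (x - y) := fun x =>
    hφ.comp (measurable_const.sub measurable_id)
  have ha0 : (0:ℝ) < a := by linarith
  have hb0 : (0:ℝ) < b := by linarith
  have hc0 : (0:ℝ) < c := by linarith
  have h1a : 1/a ≤ 1 := by rw [div_le_one ha0]; linarith
  have h1b : 1/b ≤ 1 := by rw [div_le_one hb0]; linarith
  have hca : 1/c ≤ 1/a := by linarith
  have hcb : 1/c ≤ 1/b := by linarith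
  have hac : a ≤ c := by
    rw [div_le_div_iff₀ hc0 ha0] at hca; linarith
  have hbc : b ≤ c := by
    rw [div_le_div_iff₀ hc0 hb0] at hcb; linarith
  -- pointwise key estimate
  have keypt : ∀ x : ℝ, (∫⁻ y, φ (x - y) * ψ y) ≤
      (∫⁻ y, φ (x - y) ^ a * ψ y ^ b) ^ (1/c) *
        ((∫⁻ z, φ z ^ a) ^ (1/a - 1/c) * (∫⁻ z, ψ z ^ b) ^ (1/b - 1/c)) := by
    intro x
    rcases eq_or_lt_of_le hc1 with hc_eq | hc_lt
    · -- c = 1, hence a = b = 1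
      have hceq : c = 1 := hc_eq.symm
      rw [hceq] at habc
      norm_num at habc
      have h1a' : a⁻¹ ≤ 1 := by rw [← one_div]; exact h1a
      have h1b' : b⁻¹ ≤ 1 := by rw [← one_div]; exact h1b
      have e1 : a⁻¹ = 1 := by linarith
      have e2 : b⁻¹ = 1 := by linarith
      have haeq : a = 1 := by field_simp at e1; linarith
      have hbeq : b = 1 := by field_simp at e2; linarith
      rw [hceq, haeq, hbeq]
      simp only [sub_self, ENNReal.rpow_zero, mul_one, one_div_one, ENNReal.rpow_one]
      exact le_of_eq (lintegral_congr fun y => rfl)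
    · -- 1 < c
      set c' := c/(c-1) with hc'def
      have hc'0 : (0:ℝ) < c' := div_pos hc0 (by linarith)
      have hcc' : c.HolderConjugate c' := (Real.holderConjugate_iff_eq_conjExponent hc_lt).mpr hc'def
      have hc'sum : 1/c + 1/c' = 1 := by rw [hc'def]; field_simp; ring
      rcases eq_or_lt_of_le hac with hacq | haclt
      · -- a = c, hence b = 1
        have e2 : 1/b = 1 := by rw [hacq] at habc; linarith
        have hbeq : b = 1 := by field_simp at e2; linarith
        have key2 : (∫⁻ y, φ (x - y) * ψ y) ≤
            (∫⁻ y, φ (x - y) ^ c * ψ y) ^ (1/c) * (∫⁻ y, ψ y) ^ (1/c') := by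
          have hmeq : ∀ y : ℝ, φ (x - y) * ψ y =
              (φ (x - y) ^ c * ψ y) ^ (1/c) * ψ y ^ (1/c') := by
            intro y
            rw [ENNReal.mul_rpow_of_nonneg _ _ (by positivity), ← ENNReal.rpow_mul,
              mul_one_div_cancel hc0.ne', ENNReal.rpow_one, mul_assoc,
              ← ENNReal.rpow_add_of_nonneg _ _ (by positivity) (by positivity), hc'sum,
              ENNReal.rpow_one]
          have e3 : ∀ y : ℝ, ((φ (x - y) ^ c * ψ y) ^ (1/c)) ^ c = φ (x - y) ^ c * ψ y :=
            fun y => by rw [← ENNReal.rpow_mul, one_div_mul_cancel hc0.ne', ENNReal.rpow_one]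
          have e4 : ∀ y : ℝ, (ψ y ^ (1/c')) ^ c' = ψ y :=
            fun y => by rw [← ENNReal.rpow_mul, one_div_mul_cancel hc'0.ne', ENNReal.rpow_one]
          have := ENNReal.lintegral_mul_le_Lp_mul_Lq volume hcc'
            (f := fun y => (φ (x - y) ^ c * ψ y) ^ (1/c)) (g := fun y => ψ y ^ (1/c'))
            (((((hφx x).pow_const c).mul hψ).pow_const (1/c))).aemeasurable
            ((hψ.pow_const (1/c'))).aemeasurable
          simp only [e3, e4] at this
          calc (∫⁻ y, φ (x - y) * ψ y)
              = ∫⁻ y, (φ (x - y) ^ c * ψ y) ^ (1/c) * ψ y ^ (1/c') :=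
                lintegral_congr fun y => hmeq y
            _ ≤ _ := this
        rw [hacq, hbeq]
        simp only [sub_self, ENNReal.rpow_zero, one_mul, ENNReal.rpow_one, one_div_one]
        have hexp : (1:ℝ) - 1/c = 1/c' := by rw [hc'def]; field_simp
        rw [hexp]
        exact key2
      rcases eq_or_lt_of_le hbc with hbcq | hbclt
      · -- b = c, hence a = 1
        have e1 : 1/a = 1 := by rw [hbcq] at habc; linarith
        have haeq : a = 1 := by field_simp at e1; linarith
        have key2 : (∫⁻ y, φ (x - y) * ψ y) ≤
            (∫⁻ y, φ (x - y) * ψ y ^ c) ^ (1/c) * (∫⁻ y, φ (x - y)) ^ (1/c') := by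
          have hmeq : ∀ y : ℝ, φ (x - y) * ψ y =
              (φ (x - y) * ψ y ^ c) ^ (1/c) * φ (x - y) ^ (1/c') := by
            intro y
            rw [ENNReal.mul_rpow_of_nonneg _ _ (by positivity), ← ENNReal.rpow_mul,
              mul_one_div_cancel hc0.ne', ENNReal.rpow_one]
            have : φ (x - y) ^ (1/c) * ψ y * φ (x - y) ^ (1/c') =
                (φ (x - y) ^ (1/c) * φ (x - y) ^ (1/c')) * ψ y := by ring
            rw [this, ← ENNReal.rpow_add_of_nonneg _ _ (by positivity) (by positivity), hc'sum,
              ENNReal.rpow_one]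
          have e3 : ∀ y : ℝ, ((φ (x - y) * ψ y ^ c) ^ (1/c)) ^ c = φ (x - y) * ψ y ^ c :=
            fun y => by rw [← ENNReal.rpow_mul, one_div_mul_cancel hc0.ne', ENNReal.rpow_one]
          have e4 : ∀ y : ℝ, (φ (x - y) ^ (1/c')) ^ c' = φ (x - y) :=
            fun y => by rw [← ENNReal.rpow_mul, one_div_mul_cancel hc'0.ne', ENNReal.rpow_one]
          have := ENNReal.lintegral_mul_le_Lp_mul_Lq volume hcc'
            (f := fun y => (φ (x - y) * ψ y ^ c) ^ (1/c)) (g := fun y => φ (x - y) ^ (1/c'))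
            ((((hφx x).mul (hψ.pow_const c)).pow_const (1/c))).aemeasurable
            (((hφx x).pow_const (1/c'))).aemeasurable
          simp only [e3, e4] at this
          calc (∫⁻ y, φ (x - y) * ψ y)
              = ∫⁻ y, (φ (x - y) * ψ y ^ c) ^ (1/c) * φ (x - y) ^ (1/c') :=
                lintegral_congr fun y => hmeq y
            _ ≤ _ := this
        rw [haeq, hbcq]
        simp only [sub_self, ENNReal.rpow_zero, mul_one, ENNReal.rpow_one, one_div_one]
        have hexp : (1:ℝ) - 1/c = 1/c' := by rw [hc'def]; field_simp
        rw [hexp]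
        calc (∫⁻ y, φ (x - y) * ψ y)
            ≤ (∫⁻ y, φ (x - y) * ψ y ^ c) ^ (1/c) * (∫⁻ y, φ (x - y)) ^ (1/c') := key2
          _ = _ := by rw [s19lint_sub_left φ hφ x]
      · -- a < c and b < c : three-factor Hölder
        have hainv : 1/c < 1/a := by
          rw [div_lt_div_iff₀ hc0 ha0]; linarith
        have hbinv : 1/c < 1/b := by
          rw [div_lt_div_iff₀ hc0 hb0]; linarith
        set s := (1/a - 1/c)⁻¹ with hsdef
        set t := (1/b - 1/c)⁻¹ with htdef
        have hsa : (0:ℝ) < 1/a - 1/c := by linarith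
        have hta : (0:ℝ) < 1/b - 1/c := by linarith
        have hsinv : 1/s = 1/a - 1/c := by rw [hsdef, one_div, inv_inv]
        have htinv : 1/t = 1/b - 1/c := by rw [htdef, one_div, inv_inv]
        have hs0 : (0:ℝ) < s := by rw [hsdef]; positivity
        have ht0 : (0:ℝ) < t := by rw [htdef]; positivity
        have hs1 : 1 < s := by
          have h' : 1/a - 1/c < 1 := by
            have : (0:ℝ) < 1/c := by positivity
            linarith
          rw [hsdef, lt_inv_comm₀] <;> linarith
        have ht1 : 1 < t := by
          have h' : 1/b - 1/c < 1 := by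
            have : (0:ℝ) < 1/c := by positivity
            linarith
          rw [htdef, lt_inv_comm₀] <;> linarith
        have hsum3 : 1/c + 1/s + 1/t = 1 := by rw [hsinv, htinv]; linarith
        have hFm : Measurable fun y => (φ (x - y) ^ a * ψ y ^ b) ^ (1/c) :=
          (((hφx x).pow_const a).mul (hψ.pow_const b)).pow_const _
        have hGm : Measurable fun y => φ (x - y) ^ (a/s) := (hφx x).pow_const _
        have hHm : Measurable fun y => ψ y ^ (b/t) := hψ.pow_const _
        have hold := s19holder3 volume hFm hGm hHm hc_lt hs1 ht1 hsum3
        -- pointwise identity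
        have hmeq : ∀ y : ℝ, φ (x - y) * ψ y =
            (φ (x - y) ^ a * ψ y ^ b) ^ (1/c) * φ (x - y) ^ (a/s) * ψ y ^ (b/t) := by
          intro y
          have h1 : φ (x - y) ^ (a * (1/c)) * φ (x - y) ^ (a/s) = φ (x - y) := by
            rw [← ENNReal.rpow_add_of_nonneg _ _ (by positivity) (by positivity)]
            rw [show a * (1/c) + a/s = 1 by
              rw [div_eq_mul_one_div a s, hsinv, show a * (1/c) + a * (1/a - 1/c) = a * (1/a)
                from by ring, mul_one_div_cancel ha0.ne']]
            exact ENNReal.rpow_one _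
          have h2 : ψ y ^ (b * (1/c)) * ψ y ^ (b/t) = ψ y := by
            rw [← ENNReal.rpow_add_of_nonneg _ _ (by positivity) (by positivity)]
            rw [show b * (1/c) + b/t = 1 by
              rw [div_eq_mul_one_div b t, htinv, show b * (1/c) + b * (1/b - 1/c) = b * (1/b)
                from by ring, mul_one_div_cancel hb0.ne']]
            exact ENNReal.rpow_one _
          calc φ (x - y) * ψ y
              = (φ (x - y) ^ (a * (1/c)) * φ (x - y) ^ (a/s)) *
                (ψ y ^ (b * (1/c)) * ψ y ^ (b/t)) := by rw [h1, h2]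
            _ = (φ (x - y) ^ a * ψ y ^ b) ^ (1/c) * φ (x - y) ^ (a/s) * ψ y ^ (b/t) := by
                rw [ENNReal.mul_rpow_of_nonneg _ _ (by positivity), ← ENNReal.rpow_mul,
                  ← ENNReal.rpow_mul]
                ring
        have e3 : ∀ y : ℝ, ((φ (x - y) ^ a * ψ y ^ b) ^ (1/c)) ^ c =
            φ (x - y) ^ a * ψ y ^ b :=
          fun y => by rw [← ENNReal.rpow_mul, one_div_mul_cancel hc0.ne', ENNReal.rpow_one]
        have e4 : ∀ y : ℝ, (φ (x - y) ^ (a/s)) ^ s = φ (x - y) ^ a :=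
          fun y => by rw [← ENNReal.rpow_mul, div_mul_cancel₀ a hs0.ne']
        have e5 : ∀ y : ℝ, (ψ y ^ (b/t)) ^ t = ψ y ^ b :=
          fun y => by rw [← ENNReal.rpow_mul, div_mul_cancel₀ b ht0.ne']
        simp only [e3, e4, e5] at hold
        rw [s19lint_sub_left (fun z => φ z ^ a) (hφ.pow_const a) x] at hold
        calc (∫⁻ y, φ (x - y) * ψ y)
            = ∫⁻ y, (φ (x - y) ^ a * ψ y ^ b) ^ (1/c) * φ (x - y) ^ (a/s) * ψ y ^ (b/t) :=
              lintegral_congr fun y => hmeq y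
          _ ≤ (∫⁻ y, φ (x - y) ^ a * ψ y ^ b) ^ (1/c) *
              ((∫⁻ z, φ z ^ a) ^ (1/s) * (∫⁻ z, ψ z ^ b) ^ (1/t)) := by
              rw [← mul_assoc]
              exact hold
          _ = _ := by rw [hsinv, htinv]
  -- assembly
  have hKmeas : Measurable fun x : ℝ => ∫⁻ y, φ (x - y) ^ a * ψ y ^ b :=
    Measurable.lintegral_prod_right
      (((hφ.comp (measurable_fst.sub measurable_snd)).pow_const a).mul
        ((hψ.comp measurable_snd).pow_const b))
  have hKint : (∫⁻ x, ∫⁻ y, φ (x - y) ^ a * ψ y ^ b) =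
      (∫⁻ z, φ z ^ a) * ∫⁻ z, ψ z ^ b := by
    rw [lintegral_lintegral_swap (((hφ.comp (measurable_fst.sub measurable_snd)).pow_const
      a).mul ((hψ.comp measurable_snd).pow_const b)).aemeasurable]
    have hinner : ∀ y : ℝ, (∫⁻ x, φ (x - y) ^ a * ψ y ^ b) = (∫⁻ z, φ z ^ a) * ψ y ^ b := by
      intro y
      have hφy : Measurable fun x : ℝ => φ (x - y) ^ a :=
        (hφ.comp (measurable_id.sub measurable_const)).pow_const a
      rw [lintegral_mul_const _ hφy]
      rw [s19lint_sub_right (fun z => φ z ^ a) (hφ.pow_const a) y]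
    simp_rw [hinner]
    rw [lintegral_const_mul _ (hψ.pow_const b)]
  have hfold : ∀ (X : ℝ≥0∞) (e : ℝ), 0 ≤ e → X * X ^ e = X ^ (1+e) := fun X e he => by
    rw [ENNReal.rpow_add_of_nonneg _ _ zero_le_one he, ENNReal.rpow_one]
  have hea : (0:ℝ) ≤ c * (1/a - 1/c) := mul_nonneg hc0.le (by linarith)
  have heb : (0:ℝ) ≤ c * (1/b - 1/c) := mul_nonneg hc0.le (by linarith)
  have step : (∫⁻ x, (∫⁻ y, φ (x - y) * ψ y) ^ c) ≤
      (∫⁻ z, φ z ^ a) ^ (c/a) * (∫⁻ z, ψ z ^ b) ^ (c/b) := by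
    calc ∫⁻ x, (∫⁻ y, φ (x - y) * ψ y) ^ c
        ≤ ∫⁻ x, (∫⁻ y, φ (x - y) ^ a * ψ y ^ b) *
            ((∫⁻ z, φ z ^ a) ^ (c * (1/a - 1/c)) * (∫⁻ z, ψ z ^ b) ^ (c * (1/b - 1/c))) := by
          refine lintegral_mono fun x => ?_
          calc (∫⁻ y, φ (x - y) * ψ y) ^ c
              ≤ ((∫⁻ y, φ (x - y) ^ a * ψ y ^ b) ^ (1/c) *
                 ((∫⁻ z, φ z ^ a) ^ (1/a - 1/c) * (∫⁻ z, ψ z ^ b) ^ (1/b - 1/c))) ^ c :=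
                ENNReal.rpow_le_rpow (keypt x) hc0.le
            _ = _ := by
                rw [ENNReal.mul_rpow_of_nonneg _ _ hc0.le,
                  ENNReal.mul_rpow_of_nonneg _ _ hc0.le, ← ENNReal.rpow_mul,
                  ← ENNReal.rpow_mul, ← ENNReal.rpow_mul, one_div_mul_cancel hc0.ne',
                  ENNReal.rpow_one]
                congr 2 <;> ring
      _ = (∫⁻ x, ∫⁻ y, φ (x - y) ^ a * ψ y ^ b) *
            ((∫⁻ z, φ z ^ a) ^ (c * (1/a - 1/c)) * (∫⁻ z, ψ z ^ b) ^ (c * (1/b - 1/c))) :=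
          lintegral_mul_const _ hKmeas
      _ = ((∫⁻ z, φ z ^ a) * (∫⁻ z, φ z ^ a) ^ (c * (1/a - 1/c))) *
          ((∫⁻ z, ψ z ^ b) * (∫⁻ z, ψ z ^ b) ^ (c * (1/b - 1/c))) := by
          rw [hKint]; ring
      _ = _ := by
          rw [hfold _ _ hea, hfold _ _ heb]
          congr 2 <;> field_simp <;> ring
  calc (∫⁻ x, (∫⁻ y, φ (x - y) * ψ y) ^ c) ^ (1/c)
      ≤ ((∫⁻ z, φ z ^ a) ^ (c/a) * (∫⁻ z, ψ z ^ b) ^ (c/b)) ^ (1/c) :=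
        ENNReal.rpow_le_rpow step (by positivity)
    _ = _ := by
        rw [ENNReal.mul_rpow_of_nonneg _ _ (by positivity), ← ENNReal.rpow_mul,
          ← ENNReal.rpow_mul]
        congr 2 <;> field_simp <;> ring

/-- Young's convolution inequality for `ℝ≥0∞`-valued functions on `ℝ`. -/
lemma s19young (q₁ q₂ p : ℝ≥0∞) (hq₁ : 1 ≤ q₁) (hq₂ : 1 ≤ q₂) (hp : 1 ≤ p)
    (hY : 1 / q₁ + 1 / q₂ = 1 / p + 1) {φ ψ : ℝ → ℝ≥0∞}
    (hφ : Measurable φ) (hψ : Measurable ψ) :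
    s19J p (fun x => ∫⁻ y, φ (x - y) * ψ y) ≤ s19J q₁ φ * s19J q₂ ψ := by
  have hφx : ∀ x : ℝ, Measurable fun y => φ (x - y) := fun x =>
    hφ.comp (measurable_const.sub measurable_id)
  rcases eq_or_ne p ∞ with hpt | hpt
  · subst hpt
    have hY' : 1 / q₁ + 1 / q₂ = 1 := by simpa using hY
    rcases eq_or_ne q₁ ∞ with h1t | h1t
    · subst h1t
      have hq2 : q₂ = 1 := by
        have h : 1 / q₂ = 1 := by simpa using hY'
        rwa [one_div, ENNReal.inv_eq_one] at h
      subst hq2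
      simp only [s19J, if_pos rfl, if_neg (one_ne_top : (1:ℝ≥0∞) ≠ ∞), ENNReal.toReal_one,
        ENNReal.rpow_one, one_div_one]
      refine essSup_le_of_ae_le _ (Filter.Eventually.of_forall fun x => ?_)
      calc ∫⁻ y, φ (x - y) * ψ y ≤ ∫⁻ y, essSup φ volume * ψ y := by
            refine lintegral_mono_ae ?_
            filter_upwards [(MeasureTheory.Measure.measurePreserving_sub_left volume
              x).quasiMeasurePreserving.ae (ae_le_essSup φ)] with y hy
            exact mul_le_mul_left hy _
        _ = essSup φ volume * ∫⁻ y, ψ y := lintegral_const_mul _ hψ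
    rcases eq_or_ne q₂ ∞ with h2t | h2t
    · subst h2t
      have hq1 : q₁ = 1 := by
        have h : 1 / q₁ = 1 := by simpa using hY'
        rwa [one_div, ENNReal.inv_eq_one] at h
      subst hq1
      simp only [s19J, if_pos rfl, if_neg (one_ne_top : (1:ℝ≥0∞) ≠ ∞), ENNReal.toReal_one,
        ENNReal.rpow_one, one_div_one]
      refine essSup_le_of_ae_le _ (Filter.Eventually.of_forall fun x => ?_)
      calc ∫⁻ y, φ (x - y) * ψ y ≤ ∫⁻ y, φ (x - y) * essSup ψ volume := by
            refine lintegral_mono_ae ?_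
            filter_upwards [ae_le_essSup ψ] with y hy
            exact mul_le_mul_right hy _
        _ = (∫⁻ y, φ (x - y)) * essSup ψ volume := lintegral_mul_const _ (hφx x)
        _ = (∫⁻ y, φ y) * essSup ψ volume := by rw [s19lint_sub_left φ hφ x]
    · -- both finite, conjugate exponents
      have hq₁0 : q₁ ≠ 0 := (zero_lt_one.trans_le hq₁).ne'
      have hq₂0 : q₂ ≠ 0 := (zero_lt_one.trans_le hq₂).ne'
      have hf1 : 1 / q₁ ≠ ∞ := by simp [one_div, ENNReal.inv_ne_top, hq₁0]
      have hf2 : 1 / q₂ ≠ ∞ := by simp [one_div, ENNReal.inv_ne_top, hq₂0]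
      have h1lt : 1 < q₁ := by
        rcases eq_or_lt_of_le hq₁ with h | h
        · exfalso
          rw [← h] at hY'
          simp only [div_one] at hY'
          have : 1 / q₂ = 0 := by
            have h10 : (1:ℝ≥0∞) ≠ ∞ := one_ne_top
            have := hY'
            rw [show (1:ℝ≥0∞) = 1 + 0 by simp] at this
            exact (ENNReal.add_right_inj h10).mp (by simpa using this)
          rw [one_div, ENNReal.inv_eq_zero] at this
          exact h2t this
        · exact h
      have h2lt : 1 < q₂ := by
        rcases eq_or_lt_of_le hq₂ with h | h
        · exfalso
          rw [← h] at hY'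
          simp only [div_one] at hY'
          have : 1 / q₁ = 0 := by
            have h10 : (1:ℝ≥0∞) ≠ ∞ := one_ne_top
            have h' : 1 / q₁ + 1 = 1 + 0 := by simpa using hY'
            rw [add_comm (1/q₁) 1] at h'
            exact (ENNReal.add_right_inj h10).mp h'
          rw [one_div, ENNReal.inv_eq_zero] at this
          exact h1t this
        · exact h
      have ha1 : 1 < q₁.toReal := by
        rw [← ENNReal.toReal_one]
        exact (ENNReal.toReal_lt_toReal one_ne_top h1t).mpr h1lt
      have hab : q₁.toReal⁻¹ + q₂.toReal⁻¹ = 1 := by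
        have h := congrArg ENNReal.toReal hY'
        rwa [ENNReal.toReal_add hf1 hf2, one_div, one_div, ENNReal.toReal_inv,
          ENNReal.toReal_inv, ENNReal.toReal_one] at h
      have hconj : q₁.toReal.HolderConjugate q₂.toReal := Real.holderConjugate_iff.mpr ⟨ha1, hab⟩
      simp only [s19J, if_pos rfl, if_neg h1t, if_neg h2t]
      refine essSup_le_of_ae_le _ (Filter.Eventually.of_forall fun x => ?_)
      calc ∫⁻ y, φ (x - y) * ψ y
          ≤ (∫⁻ y, φ (x - y) ^ q₁.toReal) ^ (1/q₁.toReal) *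
            (∫⁻ y, ψ y ^ q₂.toReal) ^ (1/q₂.toReal) :=
            ENNReal.lintegral_mul_le_Lp_mul_Lq volume hconj (hφx x).aemeasurable hψ.aemeasurable
        _ = _ := by rw [s19lint_sub_left (fun z => φ z ^ q₁.toReal) (hφ.pow_const _) x]
  · -- p finite
    have hq₁0 : q₁ ≠ 0 := (zero_lt_one.trans_le hq₁).ne'
    have hq₂0 : q₂ ≠ 0 := (zero_lt_one.trans_le hq₂).ne'
    have hp0 : p ≠ 0 := (zero_lt_one.trans_le hp).ne'
    have h1p0 : 1/p ≠ 0 := by rw [one_div]; exact ENNReal.inv_ne_zero.mpr hpt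
    have hgt : (1:ℝ≥0∞) < 1/p + 1 := by
      rw [add_comm]
      exact ENNReal.lt_add_right one_ne_top h1p0
    have hq1t : q₁ ≠ ∞ := by
      intro h
      rw [h] at hY
      have hY2 : 1/q₂ = 1/p + 1 := by simpa using hY
      have h2 : 1/q₂ ≤ 1 := by rw [one_div]; exact ENNReal.inv_le_one.mpr hq₂
      rw [hY2] at h2
      exact absurd h2 (not_le.mpr hgt)
    have hq2t : q₂ ≠ ∞ := by
      intro h
      rw [h] at hY
      have hY2 : 1/q₁ = 1/p + 1 := by simpa using hY
      have h2 : 1/q₁ ≤ 1 := by rw [one_div]; exact ENNReal.inv_le_one.mpr hq₁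
      rw [hY2] at h2
      exact absurd h2 (not_le.mpr hgt)
    have hf1 : 1/q₁ ≠ ∞ := by simp [one_div, ENNReal.inv_ne_top, hq₁0]
    have hf2 : 1/q₂ ≠ ∞ := by simp [one_div, ENNReal.inv_ne_top, hq₂0]
    have hf3 : 1/p ≠ ∞ := by simp [one_div, ENNReal.inv_ne_top, hp0]
    have ha1 : 1 ≤ q₁.toReal := by
      rw [← ENNReal.toReal_one]; exact ENNReal.toReal_mono hq1t hq₁
    have hb1 : 1 ≤ q₂.toReal := by
      rw [← ENNReal.toReal_one]; exact ENNReal.toReal_mono hq2t hq₂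
    have hc1 : 1 ≤ p.toReal := by
      rw [← ENNReal.toReal_one]; exact ENNReal.toReal_mono hpt hp
    have habc : 1/q₁.toReal + 1/q₂.toReal = 1/p.toReal + 1 := by
      have h := congrArg ENNReal.toReal hY
      rwa [ENNReal.toReal_add hf1 hf2, ENNReal.toReal_add hf3 one_ne_top, one_div, one_div,
        one_div, ENNReal.toReal_inv, ENNReal.toReal_inv, ENNReal.toReal_inv, ENNReal.toReal_one,
        ← one_div, ← one_div, ← one_div] at h
    simp only [s19J, if_neg hpt, if_neg hq1t, if_neg hq2t]
    exact s19young_finite ha1 hb1 hc1 habc hφ hψ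


lemma s19J_nnnorm (p : ℝ≥0∞) (hp : p ≠ 0) (h : ℝ → ℝ) :
    s19J p (fun x => (‖h x‖₊ : ℝ≥0∞)) = eLpNorm h p volume := by
  rcases eq_or_ne p ∞ with hpt | hpt
  · subst hpt
    rw [eLpNorm_exponent_top]
    rfl
  · rw [eLpNorm_eq_lintegral_rpow_enorm_toReal hp hpt]
    simp [s19J, if_neg hpt]
    rfl

lemma s19eLpNorm_le (p : ℝ≥0∞) (hp : p ≠ 0) {h : ℝ → ℝ} {Gf : ℝ → ℝ≥0∞}
    (hb : ∀ x, (‖h x‖₊ : ℝ≥0∞) ≤ Gf x) : eLpNorm h p volume ≤ s19J p Gf := by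
  rcases eq_or_ne p ∞ with hpt | hpt
  · subst hpt
    rw [eLpNorm_exponent_top]
    exact essSup_mono_ae (Filter.Eventually.of_forall hb)
  · rw [eLpNorm_eq_lintegral_rpow_enorm_toReal hp hpt]
    simp only [s19J, if_neg hpt]
    refine ENNReal.rpow_le_rpow (lintegral_mono fun x => ?_) (by positivity)
    exact ENNReal.rpow_le_rpow (hb x) ENNReal.toReal_nonneg


set_option maxHeartbeats 1000000 in
/-- Vector-valued Young inequality for the convolution: if
`1/q₁ + 1/q₂ = 1/p + 1`, then
`‖(∑_{k₁,k₂} |f^1_{k₁} * f^2_{k₂}|^r)^{1/r}‖_{L^p(ℝ)}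
  ≤ ‖(∑_{k₁} |f^1_{k₁}|^r)^{1/r}‖_{L^{q₁}(ℝ)} ‖(∑_{k₂} |f^2_{k₂}|^r)^{1/r}‖_{L^{q₂}(ℝ)}`. -/
theorem statement19 (q₁ q₂ p : ℝ≥0∞) (hq₁ : 1 ≤ q₁) (hq₂ : 1 ≤ q₂) (hp : 1 ≤ p)
    (hYoung : 1 / q₁ + 1 / q₂ = 1 / p + 1) (r : ℝ≥0∞) (hr : 1 ≤ r)
    (n₁ n₂ : ℕ) (f : Fin n₁ → ℝ → ℝ) (g : Fin n₂ → ℝ → ℝ)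
    (hf : ∀ k₁, MemLp (f k₁) q₁ volume) (hg : ∀ k₂, MemLp (g k₂) q₂ volume) :
    eLpNorm
        (fun x => lrNorm r fun k : Fin n₁ × Fin n₂ => ∫ y : ℝ, f k.1 (x - y) * g k.2 y)
        p volume
      ≤ eLpNorm (fun x => lrNorm r fun k₁ : Fin n₁ => f k₁ x) q₁ volume *
        eLpNorm (fun x => lrNorm r fun k₂ : Fin n₂ => g k₂ x) q₂ volume := by
  classical
  have hp0 : p ≠ 0 := (zero_lt_one.trans_le hp).ne'
  have hq₁0 : q₁ ≠ 0 := (zero_lt_one.trans_le hq₁).ne'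
  have hq₂0 : q₂ ≠ 0 := (zero_lt_one.trans_le hq₂).ne'
  -- measurable representatives
  set F : Fin n₁ → ℝ → ℝ := fun k => (hf k).1.mk (f k) with hFdef
  set G : Fin n₂ → ℝ → ℝ := fun k => (hg k).1.mk (g k) with hGdef
  have hFmeas : ∀ k, Measurable (F k) := fun k => (hf k).1.stronglyMeasurable_mk.measurable
  have hGmeas : ∀ k, Measurable (G k) := fun k => (hg k).1.stronglyMeasurable_mk.measurable
  have hFae : ∀ k, f k =ᵐ[volume] F k := fun k => (hf k).1.ae_eq_mk
  have hGae : ∀ k, g k =ᵐ[volume] G k := fun k => (hg k).1.ae_eq_mk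
  -- replace f and g by their measurable representatives
  have hLHS : (fun x => lrNorm r fun k : Fin n₁ × Fin n₂ => ∫ y : ℝ, f k.1 (x - y) * g k.2 y)
      = fun x => lrNorm r fun k : Fin n₁ × Fin n₂ => ∫ y : ℝ, F k.1 (x - y) * G k.2 y := by
    funext x
    congr 1
    funext k
    refine integral_congr_ae ?_
    have h1 : (fun y : ℝ => f k.1 (x - y)) =ᵐ[volume] fun y => F k.1 (x - y) :=
      (MeasureTheory.Measure.measurePreserving_sub_left volume
        x).quasiMeasurePreserving.ae (hFae k.1)
    exact h1.mul (hGae k.2)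
  have hRHS1 : eLpNorm (fun x => lrNorm r fun k₁ : Fin n₁ => f k₁ x) q₁ volume
      = eLpNorm (fun x => lrNorm r fun k₁ : Fin n₁ => F k₁ x) q₁ volume := by
    refine eLpNorm_congr_ae ?_
    filter_upwards [ae_all_iff.mpr hFae] with x hx
    congr 1
    funext k
    exact hx k
  have hRHS2 : eLpNorm (fun x => lrNorm r fun k₂ : Fin n₂ => g k₂ x) q₂ volume
      = eLpNorm (fun x => lrNorm r fun k₂ : Fin n₂ => G k₂ x) q₂ volume := by
    refine eLpNorm_congr_ae ?_
    filter_upwards [ae_all_iff.mpr hGae] with x hx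
    congr 1
    funext k
    exact hx k
  rw [hLHS, hRHS1, hRHS2]
  -- the ℝ≥0∞-valued vector norms
  set φ : ℝ → ℝ≥0∞ := fun x => s19eL r fun k₁ : Fin n₁ => (‖F k₁ x‖₊ : ℝ≥0∞) with hφdef
  set ψ : ℝ → ℝ≥0∞ := fun x => s19eL r fun k₂ : Fin n₂ => (‖G k₂ x‖₊ : ℝ≥0∞) with hψdef
  have hφm : Measurable φ := s19eL_measurable r fun k => (hFmeas k).enorm
  have hψm : Measurable ψ := s19eL_measurable r fun k => (hGmeas k).enorm
  calc eLpNorm (fun x => lrNorm r fun k : Fin n₁ × Fin n₂ =>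
          ∫ y : ℝ, F k.1 (x - y) * G k.2 y) p volume
      ≤ s19J p (fun x => ∫⁻ y, φ (x - y) * ψ y) := by
        refine s19eLpNorm_le p hp0 fun x => ?_
        calc (‖lrNorm r fun k : Fin n₁ × Fin n₂ => ∫ y : ℝ, F k.1 (x - y) * G k.2 y‖₊ : ℝ≥0∞)
            = s19eL r fun k : Fin n₁ × Fin n₂ =>
                (‖∫ y : ℝ, F k.1 (x - y) * G k.2 y‖₊ : ℝ≥0∞) := s19coe_lrNorm r hr _
          _ ≤ s19eL r fun k : Fin n₁ × Fin n₂ =>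
                ∫⁻ y, (‖F k.1 (x - y)‖₊ : ℝ≥0∞) * (‖G k.2 y‖₊ : ℝ≥0∞) := by
              refine s19eL_mono r fun k => ?_
              refine (enorm_integral_le_lintegral_enorm _).trans (le_of_eq ?_)
              exact lintegral_congr fun y => by rw [enorm_eq_nnnorm, nnnorm_mul, ENNReal.coe_mul]
          _ ≤ ∫⁻ y, s19eL r fun k : Fin n₁ × Fin n₂ =>
                (‖F k.1 (x - y)‖₊ : ℝ≥0∞) * (‖G k.2 y‖₊ : ℝ≥0∞) := by
              refine s19minkowski r hr volume fun k => ?_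
              exact ((hFmeas k.1).comp (measurable_const.sub measurable_id)).enorm.mul
                (hGmeas k.2).enorm
          _ = ∫⁻ y, φ (x - y) * ψ y := by
              refine lintegral_congr fun y => ?_
              exact s19eL_mul r (fun k₁ : Fin n₁ => (‖F k₁ (x - y)‖₊ : ℝ≥0∞))
                (fun k₂ : Fin n₂ => (‖G k₂ y‖₊ : ℝ≥0∞))
    _ ≤ s19J q₁ φ * s19J q₂ ψ := s19young q₁ q₂ p hq₁ hq₂ hp hYoung hφm hψm
    _ = _ := by
        have h1 : s19J q₁ φ = eLpNorm (fun x => lrNorm r fun k₁ : Fin n₁ => F k₁ x) q₁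
            volume := by
          rw [show φ = fun x => (‖lrNorm r fun k₁ : Fin n₁ => F k₁ x‖₊ : ℝ≥0∞) from
            funext fun x => (s19coe_lrNorm r hr _).symm]
          exact s19J_nnnorm q₁ hq₁0 _
        have h2 : s19J q₂ ψ = eLpNorm (fun x => lrNorm r fun k₂ : Fin n₂ => G k₂ x) q₂
            volume := by
          rw [show ψ = fun x => (‖lrNorm r fun k₂ : Fin n₂ => G k₂ x‖₊ : ℝ≥0∞) from
            funext fun x => (s19coe_lrNorm r hr _).symm]
          exact s19J_nnnorm q₂ hq₂0 _
        rw [h1, h2]
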